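/- For every x ∈ ℝⁿ and every (λ, r) ∈ ℝᵐ × (0, ∞), the sharp augmented Lagrangian equals the minimum of the smoothing function over the smoothing variable: L̄₁(x; λ, r) = min over t ≥ 0 of L̃_{λ,r}(x, t). Moreover, when h(x) ≠ 0 the minimum is attained at t = ‖h(x)‖, and when h(x) = 0 it is attained at t = 0. -/

import Mathlib

noncomputable section
open Classical in

/-- The extended-real-valued smoothing function `L̃_{λ,r}(x,t)`. -/
def Ltilde {n m : ℕ} (f : EuclideanSpace ℝ (Fin n) → ℝ)
    (h : EuclideanSpace ℝ (Fin n) → EuclideanSpace ℝ (Fin m))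
    (lam : EuclideanSpace ℝ (Fin m)) (r : ℝ)
    (x : EuclideanSpace ℝ (Fin n)) (t : ℝ) : EReal :=
  if 0 < t then
    (((f x + (inner ℝ lam (h x) : ℝ) + r / (2 * t) * ‖h x‖ ^ 2 + r / 2 * t) : ℝ) : EReal)
  else if t = 0 ∧ h x = 0 then ((f x : ℝ) : EReal)
  else ⊤

/-- the sharp augmented Lagrangian `L̄₁(x; λ, r) = f x + ⟨λ, h x⟩ + r‖h x‖`
is the minimum over `t ≥ 0` of the smoothing function, attained at `t = ‖h x‖`
when `h x ≠ 0`, and at `t = 0` when `h x = 0`. -/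
theorem stmt0 {n m : ℕ} (f : EuclideanSpace ℝ (Fin n) → ℝ)
    (h : EuclideanSpace ℝ (Fin n) → EuclideanSpace ℝ (Fin m))
    (hf : ContDiff ℝ 2 f) (hh : ContDiff ℝ 2 h)
    (lam : EuclideanSpace ℝ (Fin m)) (r : ℝ) (hr : 0 < r)
    (x : EuclideanSpace ℝ (Fin n)) :
    (∀ t : ℝ, 0 ≤ t →
      (((f x + (inner ℝ lam (h x) : ℝ) + r * ‖h x‖ : ℝ)) : EReal) ≤ Ltilde f h lam r x t) ∧
    (h x ≠ 0 → Ltilde f h lam r x ‖h x‖ =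
      (((f x + (inner ℝ lam (h x) : ℝ) + r * ‖h x‖ : ℝ)) : EReal)) ∧
    (h x = 0 → Ltilde f h lam r x 0 =
      (((f x + (inner ℝ lam (h x) : ℝ) + r * ‖h x‖ : ℝ)) : EReal)) := by
  refine ⟨?_, ?_, ?_⟩
  · intro t ht
    rcases eq_or_lt_of_le ht with h0 | h0
    · subst h0
      rw [Ltilde, if_neg (lt_irrefl 0)]
      by_cases hx : h x = 0
      · rw [if_pos ⟨rfl, hx⟩, EReal.coe_le_coe_iff]
        have : ‖h x‖ = 0 := by simp [hx]
        simp [hx, this]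
      · rw [if_neg (by tauto)]; exact le_top
    · rw [Ltilde, if_pos h0, EReal.coe_le_coe_iff]
      have key : r * ‖h x‖ ≤ r / (2 * t) * ‖h x‖ ^ 2 + r / 2 * t := by
        rw [div_mul_eq_mul_div, div_add' _ _ _ (by positivity), le_div_iff₀ (by positivity)]
        have sq : 0 ≤ (‖h x‖ - t) ^ 2 := sq_nonneg _
        nlinarith [hr.le, sq_nonneg (‖h x‖ - t)]
      linarith
  · intro hx
    have hn : 0 < ‖h x‖ := norm_pos_iff.mpr hx
    rw [Ltilde, if_pos hn, EReal.coe_eq_coe_iff]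
    field_simp
    ring
  · intro hx
    rw [Ltilde, if_neg (lt_irrefl 0), if_pos ⟨rfl, hx⟩, EReal.coe_eq_coe_iff]
    simp [hx]
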